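/- Let H be the Hermitian adjacency matrix (for some unimodular non-real ω) of a digraph Δ on n vertices, with largest eigenvalue λ₁ of multiplicity n − d₁, d₁ ≥ 2 and λ₁ ∉ {0, −1}. Then the n vectors obtained as columns of (λ₁ I − H)^{1/2} lie on a sphere of radius √λ₁ in ℂ^{d₁}, their pairwise Hermitian inner products lie in {0, −1/λ₁·1, −ω/λ₁, −conj(ω)/λ₁} after normalization, and consequently n ≤ d₁(3d₁+5)/2 − 1. -/

import Mathlib

open Matrix

/-- The Hermitian adjacency matrix `H_ω` of a digraph with arc relation `E`:
entry `1` on digons, `ω` on forward-only arcs, `conj ω` on backward-only arcs, `0` otherwise. -/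
noncomputable def hermAdj (n : ℕ) (E : Fin n → Fin n → Prop) [DecidableRel E] (ω : ℂ) :
    Matrix (Fin n) (Fin n) ℂ :=
  Matrix.of fun x y =>
    if E x y ∧ E y x then 1 else if E x y then ω else if E y x then starRingEnd ℂ ω else 0


open Finset ComplexConjugate

private lemma st19_emb_sum_mul {α : Type*} [Fintype α] {d : ℕ} (e : α ↪ Fin d) (X Y : α → ℂ) :
    ∑ k : Fin d, (∑ i, if e i = k then X i else 0) * (∑ j, if e j = k then Y j else 0)
      = ∑ i, X i * Y i := by
  classical
  have h1 : ∀ k : Fin d, (∑ i, if e i = k then X i else 0) * (∑ j, if e j = k then Y j else 0)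
      = ∑ i, ∑ j, (if e i = k then X i else 0) * (if e j = k then Y j else 0) :=
    fun k => Finset.sum_mul_sum _ _ _ _
  rw [Finset.sum_congr rfl fun k _ => h1 k, Finset.sum_comm]
  refine Finset.sum_congr rfl fun i _ => ?_
  rw [Finset.sum_comm]
  have h2 : ∀ j, ∑ k : Fin d, (if e i = k then X i else 0) * (if e j = k then Y j else 0)
      = if i = j then X i * Y j else 0 := by
    intro j
    simp only [ite_mul, zero_mul, mul_ite, mul_zero]
    rw [Finset.sum_ite_eq]
    simp [EmbeddingLike.apply_eq_iff_eq, eq_comm]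
  rw [Finset.sum_congr rfl fun j _ => h2 j]
  rw [Finset.sum_ite_eq]
  simp

private lemma st19_factor {n d : ℕ} (A : Matrix (Fin n) (Fin n) ℂ) (hA : A.IsHermitian)
    (lam : ℝ)
    (hle : ∀ i, hA.eigenvalues i ≤ lam)
    (hcard : Fintype.card {i : Fin n // hA.eigenvalues i ≠ lam} ≤ d) :
    ∃ v : Fin n → Fin d → ℂ,
      ∀ u w, star (v u) ⬝ᵥ v w = ((lam : ℂ) • (1 : Matrix (Fin n) (Fin n) ℂ) - A) u w := by
  classical
  set μ := hA.eigenvalues with hμ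
  set U : Matrix (Fin n) (Fin n) ℂ := (hA.eigenvectorUnitary : Matrix (Fin n) (Fin n) ℂ) with hU
  obtain ⟨e⟩ : Nonempty ({i : Fin n // μ i ≠ lam} ↪ Fin d) :=
    Function.Embedding.nonempty_of_card_le (by simpa using hcard)
  refine ⟨fun u k => ∑ i : {i : Fin n // μ i ≠ lam},
      if e i = k then ((Real.sqrt (lam - μ i) : ℝ) : ℂ) * (starRingEnd ℂ) (U u i) else 0,
    fun u w => ?_⟩
  have key : star (fun k => ∑ i : {i : Fin n // μ i ≠ lam},
      if e i = k then ((Real.sqrt (lam - μ i) : ℝ) : ℂ) * (starRingEnd ℂ) (U u i) else 0) ⬝ᵥ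
      (fun k => ∑ i : {i : Fin n // μ i ≠ lam},
      if e i = k then ((Real.sqrt (lam - μ i) : ℝ) : ℂ) * (starRingEnd ℂ) (U w i) else 0)
      = ∑ i : {i : Fin n // μ i ≠ lam},
          ((lam - μ i : ℝ) : ℂ) * (U u i * (starRingEnd ℂ) (U w i)) := by
    rw [dotProduct]
    simp only [Pi.star_apply, RCLike.star_def, map_sum, apply_ite (starRingEnd ℂ), _root_.map_mul,
      map_zero, Complex.conj_conj, Complex.conj_ofReal]
    rw [st19_emb_sum_mul e]
    refine Finset.sum_congr rfl fun i _ => ?_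
    have : (Real.sqrt (lam - μ i) : ℂ) * (Real.sqrt (lam - μ i) : ℂ) = ((lam - μ i : ℝ) : ℂ) := by
      rw [← Complex.ofReal_mul, Real.mul_self_sqrt (sub_nonneg.2 (hle i))]
    calc ((Real.sqrt (lam - μ i) : ℝ) : ℂ) * U u i *
          (((Real.sqrt (lam - μ i) : ℝ) : ℂ) * (starRingEnd ℂ) (U w i))
        = (Real.sqrt (lam - μ i) : ℂ) * (Real.sqrt (lam - μ i) : ℂ) *
          (U u i * (starRingEnd ℂ) (U w i)) := by ring
      _ = _ := by rw [this]
  rw [key]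
  -- extend the subtype sum to a full sum
  have hext : ∑ i : {i : Fin n // μ i ≠ lam}, ((lam - μ i : ℝ) : ℂ) * (U u i * (starRingEnd ℂ) (U w i))
      = ∑ i : Fin n, ((lam - μ i : ℝ) : ℂ) * (U u i * (starRingEnd ℂ) (U w i)) := by
    rw [← Finset.sum_subtype (Finset.univ.filter (fun i => μ i ≠ lam)) (by simp)
      (fun i => ((lam - μ i : ℝ) : ℂ) * (U u i * (starRingEnd ℂ) (U w i)))]
    refine Finset.sum_filter_of_ne fun i _ hne => ?_
    intro heq
    apply hne
    rw [heq, sub_self]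
    simp
  rw [hext]
  -- spectral theorem entrywise
  have hAentry : A u w = ∑ i, U u i * (μ i : ℂ) * (starRingEnd ℂ) (U w i) := by
    conv_lhs => rw [hA.spectral_theorem, Unitary.conjStarAlgAut_apply]
    rw [Matrix.mul_apply]
    refine Finset.sum_congr rfl fun i _ => ?_
    rw [Matrix.mul_diagonal, Matrix.star_apply, RCLike.star_def]
    norm_num
    rfl
  have hone : (1 : Matrix (Fin n) (Fin n) ℂ) u w = ∑ i, U u i * (starRingEnd ℂ) (U w i) := by
    rw [← Matrix.mem_unitaryGroup_iff.mp hA.eigenvectorUnitary.2, Matrix.mul_apply]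
    refine Finset.sum_congr rfl fun i _ => ?_
    rw [Matrix.star_apply, RCLike.star_def]
  rw [Matrix.sub_apply, Matrix.smul_apply, hone, hAentry, smul_eq_mul, Finset.mul_sum,
    ← Finset.sum_sub_distrib]
  refine Finset.sum_congr rfl fun i _ => ?_
  push_cast
  ring

private lemma st19_eigen_data {n d : ℕ} (A : Matrix (Fin n) (Fin n) ℂ) (hA : A.IsHermitian)
    (lam : ℝ)
    (heig : Module.End.HasEigenvalue (Matrix.toLin' A) (lam : ℂ))
    (hmax : ∀ μ' : ℝ, Module.End.HasEigenvalue (Matrix.toLin' A) (μ' : ℂ) → μ' ≤ lam)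
    (hdn : d ≤ n)
    (hmult : Module.finrank ℂ (Module.End.eigenspace (Matrix.toLin' A) (lam : ℂ)) = n - d) :
    (∀ i, hA.eigenvalues i ≤ lam) ∧ Fintype.card {i : Fin n // hA.eigenvalues i ≠ lam} ≤ d
      ∧ 1 ≤ n - d := by
  classical
  set μ := hA.eigenvalues with hμdef
  set U : Matrix (Fin n) (Fin n) ℂ := (hA.eigenvectorUnitary : Matrix (Fin n) (Fin n) ℂ) with hUdef
  have hUU : U * star U = 1 := Matrix.mem_unitaryGroup_iff.mp hA.eigenvectorUnitary.2
  have hUU' : star U * U = 1 := Matrix.mem_unitaryGroup_iff'.mp hA.eigenvectorUnitary.2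
  -- each eigenvalue of hA is an eigenvalue of toLin' A
  have hle : ∀ i, μ i ≤ lam := by
    intro i
    apply hmax
    have hx : A *ᵥ ⇑(hA.eigenvectorBasis i) = μ i • ⇑(hA.eigenvectorBasis i) :=
      hA.mulVec_eigenvectorBasis i
    have hx0 : (⇑(hA.eigenvectorBasis i) : Fin n → ℂ) ≠ 0 := by
      intro h
      have h1 : hA.eigenvectorBasis i = 0 := by
        ext k
        exact congrFun h k
      have h2 := hA.eigenvectorBasis.orthonormal.1 i
      rw [h1] at h2
      simp at h2
    refine Module.End.hasEigenvalue_of_hasEigenvector (x := ⇑(hA.eigenvectorBasis i)) ⟨?_, hx0⟩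
    rw [Module.End.mem_eigenspace_iff, Matrix.toLin'_apply, hx]
    ext k
    simp [Complex.real_smul]
  refine ⟨hle, ?_, ?_⟩
  · -- multiplicity bound
    set g : {i : Fin n // μ i = lam} → (Fin n → ℂ) := fun i => (fun u => U u i) with hgdef
    have hsub : Module.End.eigenspace (Matrix.toLin' A) (lam : ℂ) ≤
        Submodule.span ℂ (Set.range g) := by
      intro x hx
      have hx' : A *ᵥ x = (lam : ℂ) • x := by
        rw [← Matrix.toLin'_apply A x]
        exact Module.End.mem_eigenspace_iff.mp hx
      set y : Fin n → ℂ := star U *ᵥ x with hydef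
      have hUy : U *ᵥ y = x := by
        rw [hydef, Matrix.mulVec_mulVec, hUU, Matrix.one_mulVec]
      have hDy : Matrix.diagonal (RCLike.ofReal ∘ μ) *ᵥ y = (lam : ℂ) • y := by
        have h3 : star U *ᵥ (A *ᵥ x) = Matrix.diagonal (RCLike.ofReal ∘ μ) *ᵥ y := by
          rw [Matrix.mulVec_mulVec]
          conv_lhs => rw [hA.spectral_theorem, Unitary.conjStarAlgAut_apply]
          rw [hydef, Matrix.mulVec_mulVec]
          congr 1
          rw [← Matrix.mul_assoc, ← Matrix.mul_assoc, hUU', Matrix.one_mul]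
        have h4 : star U *ᵥ ((lam : ℂ) • x) = (lam : ℂ) • y := by
          rw [Matrix.mulVec_smul, hydef]
        rw [← h3, hx', h4]
      have hyi : ∀ i, μ i ≠ lam → y i = 0 := by
        intro i hne
        have h5 := congrFun hDy i
        have h6 : ((μ i : ℂ) - (lam : ℂ)) * y i = 0 := by
          rw [sub_mul]
          rw [Matrix.mulVec_diagonal] at h5
          simp only [Function.comp_apply, Pi.smul_apply, smul_eq_mul] at h5
          rw [sub_eq_zero]
          convert h5 using 2
          rfl
        rcases mul_eq_zero.mp h6 with h | h
        · exfalso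
          apply hne
          have := sub_eq_zero.mp h
          exact_mod_cast this
        · exact h
      rw [← hUy]
      have hsum : U *ᵥ y = ∑ i : Fin n, y i • (fun u => U u i) := by
        ext u
        simp [Matrix.mulVec, dotProduct, Finset.sum_apply, mul_comm]
      rw [hsum]
      apply Submodule.sum_mem
      intro i _
      by_cases hi : μ i = lam
      · exact Submodule.smul_mem _ _ (Submodule.subset_span ⟨⟨i, hi⟩, rfl⟩)
      · rw [hyi i hi]
        simp
    have h7 : n - d ≤ Fintype.card {i : Fin n // μ i = lam} := by
      calc n - d = Module.finrank ℂ (Module.End.eigenspace (Matrix.toLin' A) (lam : ℂ)) :=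
            hmult.symm
        _ ≤ Module.finrank ℂ (Submodule.span ℂ (Set.range g)) := Submodule.finrank_mono hsub
        _ ≤ (Set.range g).toFinset.card := finrank_span_le_card (Set.range g)
        _ ≤ Fintype.card {i : Fin n // μ i = lam} := by
            rw [Set.toFinset_range]
            exact le_trans (Finset.card_image_le) (by simp)
    have h8 : Fintype.card {i : Fin n // μ i ≠ lam}
        = n - Fintype.card {i : Fin n // μ i = lam} := by
      simp only [ne_eq]
      rw [Fintype.card_subtype_compl]
      simp
    have h9 : Fintype.card {i : Fin n // μ i = lam} ≤ n := by
      have := Fintype.card_subtype_le (fun i : Fin n => μ i = lam)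
      simpa using this
    omega
  · -- eigenspace nonzero
    have h10 : Module.End.eigenspace (Matrix.toLin' A) (lam : ℂ) ≠ ⊥ := heig
    have h11 : Module.finrank ℂ (Module.End.eigenspace (Matrix.toLin' A) (lam : ℂ)) ≠ 0 := by
      intro h
      exact h10 (Submodule.finrank_eq_zero.mp h)
    omega

private lemma st19_gram_expand {n : ℕ} {ι : Type*} [Fintype ι] (f : Fin n → ι → ℂ)
    (c c' : Fin n → ℂ) :
    ∑ z : ι, conj (∑ u, c u * f u z) * (∑ w, c' w * f w z)
      = ∑ u, ∑ w, conj (c u) * c' w * (∑ z, conj (f u z) * f w z) := by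
  have h1 : ∀ z, conj (∑ u, c u * f u z) * (∑ w, c' w * f w z)
      = ∑ u, ∑ w, conj (c u) * c' w * (conj (f u z) * f w z) := by
    intro z
    rw [map_sum, Finset.sum_mul_sum]
    refine Finset.sum_congr rfl fun u _ => Finset.sum_congr rfl fun w _ => ?_
    rw [_root_.map_mul]
    ring
  rw [Finset.sum_congr rfl fun z _ => h1 z, Finset.sum_comm]
  refine Finset.sum_congr rfl fun u _ => ?_
  rw [Finset.sum_comm]
  exact Finset.sum_congr rfl fun w _ => (Finset.mul_sum _ _ _).symm

private lemma st19_sum_conj_mul_self {ι : Type*} [Fintype ι] (x : ι → ℂ) :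
    ∑ z, conj (x z) * x z = ((∑ z, Complex.normSq (x z) : ℝ) : ℂ) := by
  push_cast
  exact Finset.sum_congr rfl fun z _ => (Complex.normSq_eq_conj_mul_self).symm ▸ rfl

private lemma st19_sym_pair_sum {d : ℕ} (h : Fin d → ℂ) :
    ∑ p ∈ Finset.univ.filter (fun p : Fin d × Fin d => p.1 ≤ p.2),
        (if p.1 = p.2 then (1 : ℂ) else 2) * (h p.1 * h p.2) = (∑ i, h i) ^ 2 := by
  classical
  have hall : (∑ i, h i) ^ 2 = ∑ p : Fin d × Fin d, h p.1 * h p.2 := by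
    rw [sq, Finset.sum_mul_sum, Fintype.sum_prod_type]
  have hsplit : ∑ p : Fin d × Fin d, h p.1 * h p.2
      = (∑ p ∈ Finset.univ.filter (fun p : Fin d × Fin d => p.1 ≤ p.2), h p.1 * h p.2)
      + ∑ p ∈ Finset.univ.filter (fun p : Fin d × Fin d => ¬ p.1 ≤ p.2), h p.1 * h p.2 :=
    (Finset.sum_filter_add_sum_filter_not _ _ _).symm
  have hswap : ∑ p ∈ Finset.univ.filter (fun p : Fin d × Fin d => ¬ p.1 ≤ p.2), h p.1 * h p.2
      = ∑ p ∈ Finset.univ.filter (fun p : Fin d × Fin d => p.1 < p.2), h p.1 * h p.2 := by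
    refine Finset.sum_nbij' (fun p => (p.2, p.1)) (fun p => (p.2, p.1)) ?_ ?_ ?_ ?_ ?_
    · intro p hp
      simp only [Finset.mem_filter, Finset.mem_univ, true_and] at hp ⊢
      exact lt_of_not_ge hp
    · intro p hp
      simp only [Finset.mem_filter, Finset.mem_univ, true_and] at hp ⊢
      exact not_le_of_gt hp
    · intro p _; rfl
    · intro p _; rfl
    · intro p _; exact mul_comm _ _
  have hle_split : ∑ p ∈ Finset.univ.filter (fun p : Fin d × Fin d => p.1 ≤ p.2),
        (if p.1 = p.2 then (1 : ℂ) else 2) * (h p.1 * h p.2)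
      = (∑ p ∈ Finset.univ.filter (fun p : Fin d × Fin d => p.1 ≤ p.2), h p.1 * h p.2)
      + ∑ p ∈ Finset.univ.filter (fun p : Fin d × Fin d => p.1 < p.2), h p.1 * h p.2 := by
    have h2 : ∀ p : Fin d × Fin d, (if p.1 = p.2 then (1 : ℂ) else 2) * (h p.1 * h p.2)
        = h p.1 * h p.2 + (if p.1 ≠ p.2 then h p.1 * h p.2 else 0) := by
      intro p
      by_cases hp : p.1 = p.2 <;> simp [hp] <;> ring
    rw [Finset.sum_congr rfl fun p _ => h2 p, Finset.sum_add_distrib]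
    congr 1
    rw [Finset.sum_ite, Finset.sum_const_zero, add_zero, Finset.filter_filter]
    apply Finset.sum_congr _ fun p _ => rfl
    apply Finset.filter_congr
    intro p _
    simp only [ne_eq]
    constructor
    · rintro ⟨h1, h2⟩; exact lt_of_le_of_ne h1 h2
    · intro h1; exact ⟨le_of_lt h1, ne_of_lt h1⟩
  rw [hle_split, hall, hsplit, hswap]

private lemma st19_card_sym {d : ℕ} :
    Fintype.card {p : Fin d × Fin d // p.1 ≤ p.2} = (d + 1) * d / 2 := by
  rw [← Fintype.card_congr (Sym2.sortEquiv (α := Fin d))]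
  have := Sym2.card (α := Fin d)
  simp only [Fintype.card_fin] at this
  rw [this, Nat.choose_two_right]
  simp

private lemma st19_master {n d : ℕ} (v : Fin n → Fin d → ℂ) (sr Qr : ℝ)
    (hQ : ∀ u w, (1 + (sr : ℂ)) * (star (v u) ⬝ᵥ v w) + (star (v w) ⬝ᵥ v u)
        + (1 + (sr : ℂ)) * ((star (v u) ⬝ᵥ v w) * (star (v w) ⬝ᵥ v u))
        + (star (v u) ⬝ᵥ v w) ^ 2
      = if u = w then ((Qr : ℝ) : ℂ) else 0)
    (c c' : Fin n → ℂ) :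
    (1 + (sr : ℂ)) * ((∑ k : Fin d, conj (∑ u, c u * v u k) * (∑ w, c' w * v w k))
      + (∑ p : Fin d × Fin d, conj (∑ u, c u * (v u p.1 * conj (v u p.2)))
          * (∑ w, c' w * (v w p.1 * conj (v w p.2)))))
    + ((∑ k : Fin d, conj (∑ u, c u * conj (v u k)) * (∑ w, c' w * conj (v w k)))
      + (∑ p : {p : Fin d × Fin d // p.1 ≤ p.2},
          conj (∑ u, c u * ((if p.1.1 = p.1.2 then (1 : ℂ) else ((Real.sqrt 2 : ℝ) : ℂ))
              * (v u p.1.1 * v u p.1.2)))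
          * (∑ w, c' w * ((if p.1.1 = p.1.2 then (1 : ℂ) else ((Real.sqrt 2 : ℝ) : ℂ))
              * (v w p.1.1 * v w p.1.2)))))
    = ((Qr : ℝ) : ℂ) * ∑ u, conj (c u) * c' u := by
  classical
  have hdot : ∀ u w, ∑ k, conj (v u k) * v w k = star (v u) ⬝ᵥ v w := by
    intro u w
    simp [dotProduct, Pi.star_apply, RCLike.star_def]
  -- block A
  have hSA : (∑ k : Fin d, conj (∑ u, c u * v u k) * (∑ w, c' w * v w k))
      = ∑ u, ∑ w, conj (c u) * c' w * (star (v u) ⬝ᵥ v w) := by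
    rw [st19_gram_expand]
    exact Finset.sum_congr rfl fun u _ => Finset.sum_congr rfl fun w _ => by rw [hdot]
  -- block B
  have hSB : (∑ k : Fin d, conj (∑ u, c u * conj (v u k)) * (∑ w, c' w * conj (v w k)))
      = ∑ u, ∑ w, conj (c u) * c' w * (star (v w) ⬝ᵥ v u) := by
    rw [st19_gram_expand]
    refine Finset.sum_congr rfl fun u _ => Finset.sum_congr rfl fun w _ => ?_
    congr 1
    rw [← hdot]
    simp only [Complex.conj_conj]
    exact Finset.sum_congr rfl fun k _ => mul_comm _ _
  -- block C
  have hSC : (∑ p : Fin d × Fin d, conj (∑ u, c u * (v u p.1 * conj (v u p.2)))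
          * (∑ w, c' w * (v w p.1 * conj (v w p.2))))
      = ∑ u, ∑ w, conj (c u) * c' w * ((star (v u) ⬝ᵥ v w) * (star (v w) ⬝ᵥ v u)) := by
    rw [st19_gram_expand]
    refine Finset.sum_congr rfl fun u _ => Finset.sum_congr rfl fun w _ => ?_
    congr 1
    rw [Fintype.sum_prod_type, ← hdot u w, ← hdot w u]
    rw [Finset.sum_mul_sum]
    refine Finset.sum_congr rfl fun i _ => Finset.sum_congr rfl fun j _ => ?_
    simp only [_root_.map_mul, Complex.conj_conj]
    ring
  -- block D
  have hSD : (∑ p : {p : Fin d × Fin d // p.1 ≤ p.2},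
          conj (∑ u, c u * ((if p.1.1 = p.1.2 then (1 : ℂ) else ((Real.sqrt 2 : ℝ) : ℂ))
              * (v u p.1.1 * v u p.1.2)))
          * (∑ w, c' w * ((if p.1.1 = p.1.2 then (1 : ℂ) else ((Real.sqrt 2 : ℝ) : ℂ))
              * (v w p.1.1 * v w p.1.2))))
      = ∑ u, ∑ w, conj (c u) * c' w * ((star (v u) ⬝ᵥ v w) ^ 2) := by
    rw [st19_gram_expand]
    refine Finset.sum_congr rfl fun u _ => Finset.sum_congr rfl fun w _ => ?_
    congr 1
    rw [← hdot u w]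
    rw [← st19_sym_pair_sum (fun i => conj (v u i) * v w i)]
    rw [show (Finset.univ : Finset {p : Fin d × Fin d // p.1 ≤ p.2})
        = Finset.univ.subtype (fun p : Fin d × Fin d => p.1 ≤ p.2) from
        (Finset.subtype_univ _).symm,
      Finset.sum_subtype_eq_sum_filter (fun p : Fin d × Fin d =>
        conj ((if p.1 = p.2 then (1 : ℂ) else ((Real.sqrt 2 : ℝ) : ℂ)) * (v u p.1 * v u p.2))
        * ((if p.1 = p.2 then (1 : ℂ) else ((Real.sqrt 2 : ℝ) : ℂ)) * (v w p.1 * v w p.2)))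
        (p := fun p : Fin d × Fin d => p.1 ≤ p.2)]
    refine Finset.sum_congr rfl fun p hp => ?_
    by_cases hpd : p.1 = p.2
    · simp only [hpd, if_pos]
      simp only [_root_.map_mul, _root_.map_one, Complex.conj_conj]
      ring
    · simp only [hpd, if_neg, if_false]
      simp only [_root_.map_mul, Complex.conj_ofReal]
      have h2 : ((Real.sqrt 2 : ℝ) : ℂ) * ((Real.sqrt 2 : ℝ) : ℂ) = 2 := by
        rw [← Complex.ofReal_mul, Real.mul_self_sqrt (by norm_num)]
        norm_num
      calc ((Real.sqrt 2 : ℝ) : ℂ) * ((starRingEnd ℂ) (v u p.1) * (starRingEnd ℂ) (v u p.2))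
            * (((Real.sqrt 2 : ℝ) : ℂ) * (v w p.1 * v w p.2))
          = (((Real.sqrt 2 : ℝ) : ℂ) * ((Real.sqrt 2 : ℝ) : ℂ))
            * (((starRingEnd ℂ) (v u p.1) * v w p.1) * ((starRingEnd ℂ) (v u p.2) * v w p.2)) := by
            ring
        _ = _ := by rw [h2]
  rw [hSA, hSB, hSC, hSD]
  -- combine into a single double sum and apply hQ
  have hcomb : ∀ u w, (1 + (sr : ℂ)) * (conj (c u) * c' w * (star (v u) ⬝ᵥ v w)
        + conj (c u) * c' w * ((star (v u) ⬝ᵥ v w) * (star (v w) ⬝ᵥ v u)))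
      + (conj (c u) * c' w * (star (v w) ⬝ᵥ v u)
        + conj (c u) * c' w * ((star (v u) ⬝ᵥ v w) ^ 2))
      = conj (c u) * c' w * (if u = w then ((Qr : ℝ) : ℂ) else 0) := by
    intro u w
    rw [← hQ u w]
    ring
  calc (1 + (sr : ℂ)) * ((∑ u, ∑ w, conj (c u) * c' w * (star (v u) ⬝ᵥ v w))
        + ∑ u, ∑ w, conj (c u) * c' w * ((star (v u) ⬝ᵥ v w) * (star (v w) ⬝ᵥ v u)))
      + ((∑ u, ∑ w, conj (c u) * c' w * (star (v w) ⬝ᵥ v u))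
        + ∑ u, ∑ w, conj (c u) * c' w * ((star (v u) ⬝ᵥ v w) ^ 2))
      = ∑ u, ∑ w, ((1 + (sr : ℂ)) * (conj (c u) * c' w * (star (v u) ⬝ᵥ v w)
          + conj (c u) * c' w * ((star (v u) ⬝ᵥ v w) * (star (v w) ⬝ᵥ v u)))
        + (conj (c u) * c' w * (star (v w) ⬝ᵥ v u)
          + conj (c u) * c' w * ((star (v u) ⬝ᵥ v w) ^ 2))) := by
        simp only [Finset.mul_sum, ← Finset.sum_add_distrib]
    _ = ∑ u, ∑ w, conj (c u) * c' w * (if u = w then ((Qr : ℝ) : ℂ) else 0) := by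
        exact Finset.sum_congr rfl fun u _ => Finset.sum_congr rfl fun w _ => hcomb u w
    _ = ((Qr : ℝ) : ℂ) * ∑ u, conj (c u) * c' u := by
        rw [Finset.mul_sum]
        refine Finset.sum_congr rfl fun u _ => ?_
        simp only [mul_ite, mul_zero]
        rw [Finset.sum_ite_eq]
        simp [mul_comm]

private lemma st19_scale {n : ℕ} {α : Type*} [Fintype α] (g : Fin n → α → ℂ) (s : ℝ)
    (c c' : Fin n → ℂ) :
    ∑ z : α, conj (∑ u, c u * ((s : ℂ) * g u z)) * (∑ w, c' w * ((s : ℂ) * g w z))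
      = ((s * s : ℝ) : ℂ) * ∑ z : α, conj (∑ u, c u * g u z) * (∑ w, c' w * g w z) := by
  rw [Finset.mul_sum]
  refine Finset.sum_congr rfl fun z _ => ?_
  have h1 : ∀ (b : Fin n → ℂ), (∑ u, b u * ((s : ℂ) * g u z)) = (s : ℂ) * ∑ u, b u * g u z := by
    intro b
    rw [Finset.mul_sum]
    exact Finset.sum_congr rfl fun u _ => by ring
  rw [h1 c, h1 c', _root_.map_mul, Complex.conj_ofReal]
  push_cast
  ring

private lemma st19_single_dot {m : Type*} [Fintype m] [DecidableEq m] (g : m → ℂ) (u : m) :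
    ∑ u', conj ((Pi.single u (1 : ℂ) : m → ℂ) u') * g u' = g u := by
  have h : ∀ u', conj ((Pi.single u (1 : ℂ) : m → ℂ) u') * g u' = if u' = u then g u' else 0 := by
    intro u'
    by_cases hh : u' = u <;> simp [Pi.single_apply, hh]
  rw [Finset.sum_congr rfl fun u' _ => h u', Finset.sum_ite_eq']
  simp

private lemma st19_dot_single {m : Type*} [Fintype m] [DecidableEq m] (g : m → ℂ) (z₀ : m) :
    ∑ z, conj (g z) * (Pi.single z₀ (1 : ℂ) : m → ℂ) z = conj (g z₀) := by
  have h : ∀ z, conj (g z) * (Pi.single z₀ (1 : ℂ) : m → ℂ) z = if z = z₀ then conj (g z) else 0 := by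
    intro z
    by_cases hh : z = z₀ <;> simp [Pi.single_apply, hh]
  rw [Finset.sum_congr rfl fun z _ => h z, Finset.sum_ite_eq']
  simp

private lemma st19_caseA {n d : ℕ} (v : Fin n → Fin d → ℂ) (sr Qr : ℝ)
    (hQ : ∀ u w, (1 + (sr : ℂ)) * (star (v u) ⬝ᵥ v w) + (star (v w) ⬝ᵥ v u)
        + (1 + (sr : ℂ)) * ((star (v u) ⬝ᵥ v w) * (star (v w) ⬝ᵥ v u))
        + (star (v u) ⬝ᵥ v w) ^ 2
      = if u = w then ((Qr : ℝ) : ℂ) else 0)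
    (hQpos : 0 < Qr) (hs : 1 + sr ≤ 0) :
    n ≤ d + (d + 1) * d / 2 := by
  classical
  set σ := {p : Fin d × Fin d // p.1 ≤ p.2} with hσ
  set F2 : Fin n → (Fin d ⊕ σ) → ℂ := fun u => Sum.elim (fun k => conj (v u k))
      (fun p => (if p.1.1 = p.1.2 then (1 : ℂ) else ((Real.sqrt 2 : ℝ) : ℂ))
        * (v u p.1.1 * v u p.1.2)) with hF2
  set T2 : (Fin n → ℂ) →ₗ[ℂ] ((Fin d ⊕ σ) → ℂ) :=
    { toFun := fun c => fun z => ∑ u, c u * F2 u z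
      map_add' := by
        intro c c'
        funext z
        simp [add_mul, Finset.sum_add_distrib]
      map_smul' := by
        intro a c
        funext z
        simp [Finset.mul_sum, mul_assoc] } with hT2
  have hinj : ∀ c, T2 c = 0 → c = 0 := by
    intro c hc
    have hB : (∑ k : Fin d, conj (∑ u, c u * conj (v u k)) * (∑ w, c w * conj (v w k))) = 0 := by
      refine Finset.sum_eq_zero fun k _ => ?_
      have h1 : (∑ u, c u * conj (v u k)) = 0 := by
        have := congrFun hc (Sum.inl k)
        simpa [hT2, hF2] using this
      rw [h1]
      simp
    have hD : (∑ p : σ,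
        conj (∑ u, c u * ((if p.1.1 = p.1.2 then (1 : ℂ) else ((Real.sqrt 2 : ℝ) : ℂ))
            * (v u p.1.1 * v u p.1.2)))
        * (∑ w, c w * ((if p.1.1 = p.1.2 then (1 : ℂ) else ((Real.sqrt 2 : ℝ) : ℂ))
            * (v w p.1.1 * v w p.1.2)))) = 0 := by
      refine Finset.sum_eq_zero fun p _ => ?_
      have h1 : (∑ u, c u * ((if p.1.1 = p.1.2 then (1 : ℂ) else ((Real.sqrt 2 : ℝ) : ℂ))
          * (v u p.1.1 * v u p.1.2))) = 0 := by
        have := congrFun hc (Sum.inr p)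
        simpa [hT2, hF2] using this
      rw [h1]
      simp
    have hm := st19_master v sr Qr hQ c c
    rw [hB, hD, add_zero] at hm
    -- convert to real
    obtain ⟨a, ha, hae⟩ : ∃ a : ℝ, 0 ≤ a ∧
        (∑ k : Fin d, conj (∑ u, c u * v u k) * (∑ w, c w * v w k)) = (a : ℂ) := by
      refine ⟨∑ k : Fin d, Complex.normSq (∑ u, c u * v u k), ?_, ?_⟩
      · exact Finset.sum_nonneg fun k _ => Complex.normSq_nonneg _
      · exact st19_sum_conj_mul_self _
    obtain ⟨b, hb, hbe⟩ : ∃ b : ℝ, 0 ≤ b ∧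
        (∑ p : Fin d × Fin d, conj (∑ u, c u * (v u p.1 * conj (v u p.2)))
          * (∑ w, c w * (v w p.1 * conj (v w p.2)))) = (b : ℂ) := by
      refine ⟨∑ p : Fin d × Fin d, Complex.normSq (∑ u, c u * (v u p.1 * conj (v u p.2))), ?_, ?_⟩
      · exact Finset.sum_nonneg fun k _ => Complex.normSq_nonneg _
      · exact st19_sum_conj_mul_self _
    have hee : (∑ u, conj (c u) * c u) = ((∑ u, Complex.normSq (c u) : ℝ) : ℂ) :=
      st19_sum_conj_mul_self _
    rw [hae, hbe, hee] at hm
    have hreal : (1 + sr) * (a + b) = Qr * (∑ u, Complex.normSq (c u)) := by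
      rw [add_zero] at hm
      exact_mod_cast hm
    have hce : (∑ u, Complex.normSq (c u)) = 0 := by
      have h1 : 0 ≤ (∑ u, Complex.normSq (c u)) :=
        Finset.sum_nonneg fun u _ => Complex.normSq_nonneg _
      nlinarith
    funext u
    have := (Finset.sum_eq_zero_iff_of_nonneg
      (fun u _ => Complex.normSq_nonneg (c u))).mp hce u (Finset.mem_univ u)
    simpa using Complex.normSq_eq_zero.mp this
  have hinj' : Function.Injective T2 := by
    rw [← LinearMap.ker_eq_bot]
    exact LinearMap.ker_eq_bot'.mpr hinj
  calc n = Module.finrank ℂ (Fin n → ℂ) := by simp [Module.finrank_pi]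
    _ ≤ Module.finrank ℂ ((Fin d ⊕ σ) → ℂ) :=
        LinearMap.finrank_le_finrank_of_injective hinj'
    _ = d + (d + 1) * d / 2 := by
        rw [Module.finrank_pi]
        rw [Fintype.card_sum, Fintype.card_fin, st19_card_sym]

private lemma st19_caseB {n d : ℕ} (v : Fin n → Fin d → ℂ) (lam sr Qr : ℝ)
    (hQ : ∀ u w, (1 + (sr : ℂ)) * (star (v u) ⬝ᵥ v w) + (star (v w) ⬝ᵥ v u)
        + (1 + (sr : ℂ)) * ((star (v u) ⬝ᵥ v w) * (star (v w) ⬝ᵥ v u))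
        + (star (v u) ⬝ᵥ v w) ^ 2
      = if u = w then ((Qr : ℝ) : ℂ) else 0)
    (hQpos : 0 < Qr) (hs : 0 < 1 + sr) (hd2 : 2 ≤ d)
    (hvlam : ∀ u, (∑ i, Complex.normSq (v u i)) = lam) :
    n < 2 * d + d * d + (d + 1) * d / 2 := by
  classical
  set σ := {p : Fin d × Fin d // p.1 ≤ p.2} with hσ
  set sa : ℝ := Real.sqrt (1 + sr) with hsadef
  have hsa2 : sa * sa = 1 + sr := Real.mul_self_sqrt hs.le
  set F : Fin n → ((Fin d ⊕ Fin d) ⊕ ((Fin d × Fin d) ⊕ σ)) → ℂ := fun u =>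
    Sum.elim
      (Sum.elim (fun k => (sa : ℂ) * v u k) (fun k => conj (v u k)))
      (Sum.elim (fun p => (sa : ℂ) * (v u p.1 * conj (v u p.2)))
        (fun p => (if p.1.1 = p.1.2 then (1 : ℂ) else ((Real.sqrt 2 : ℝ) : ℂ))
          * (v u p.1.1 * v u p.1.2))) with hF
  set T : (Fin n → ℂ) →ₗ[ℂ] (((Fin d ⊕ Fin d) ⊕ ((Fin d × Fin d) ⊕ σ)) → ℂ) :=
    { toFun := fun c => fun z => ∑ u, c u * F u z
      map_add' := by
        intro c c'
        funext z
        simp [add_mul, Finset.sum_add_distrib]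
      map_smul' := by
        intro a c
        funext z
        simp [Finset.mul_sum, mul_assoc] } with hT
  have hTapp : ∀ (c : Fin n → ℂ) z, T c z = ∑ u, c u * F u z := fun c z => rfl
  have hKEY : ∀ c c' : Fin n → ℂ,
      (∑ z, conj (T c z) * T c' z) = ((Qr : ℝ) : ℂ) * ∑ u, conj (c u) * c' u := by
    intro c c'
    have hsplit : (∑ z, conj (T c z) * T c' z)
        = (∑ k : Fin d, conj (∑ u, c u * ((sa : ℂ) * v u k)) * (∑ w, c' w * ((sa : ℂ) * v w k)))
        + (∑ k : Fin d, conj (∑ u, c u * conj (v u k)) * (∑ w, c' w * conj (v w k)))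
        + ((∑ p : Fin d × Fin d,
              conj (∑ u, c u * ((sa : ℂ) * (v u p.1 * conj (v u p.2))))
              * (∑ w, c' w * ((sa : ℂ) * (v w p.1 * conj (v w p.2)))))
          + (∑ p : σ,
              conj (∑ u, c u * ((if p.1.1 = p.1.2 then (1 : ℂ) else ((Real.sqrt 2 : ℝ) : ℂ))
                  * (v u p.1.1 * v u p.1.2)))
              * (∑ w, c' w * ((if p.1.1 = p.1.2 then (1 : ℂ) else ((Real.sqrt 2 : ℝ) : ℂ))
                  * (v w p.1.1 * v w p.1.2))))) := by
      rw [Fintype.sum_sum_type, Fintype.sum_sum_type, Fintype.sum_sum_type]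
      simp only [hTapp, hF, Sum.elim_inl, Sum.elim_inr]
    rw [hsplit, st19_scale v sa c c', st19_scale (fun u (p : Fin d × Fin d) => v u p.1 * conj (v u p.2)) sa c c',
      hsa2]
    have hmas := st19_master v sr Qr hQ c c'
    push_cast
    push_cast at hmas
    linear_combination hmas
  have hQC : ((Qr : ℝ) : ℂ) ≠ 0 := by
    simpa using ne_of_gt hQpos
  have hinj : ∀ c, T c = 0 → c = 0 := by
    intro c hc
    have h1 : (∑ z, conj (T c z) * T c z) = 0 := by
      rw [hc]
      simp
    rw [hKEY c c, st19_sum_conj_mul_self] at h1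
    have h2 : ((∑ u, Complex.normSq (c u) : ℝ) : ℂ) = 0 := by
      rcases mul_eq_zero.mp h1 with h | h
      · exact absurd h hQC
      · exact h
    have h3 : (∑ u, Complex.normSq (c u)) = 0 := by exact_mod_cast h2
    funext u
    have := (Finset.sum_eq_zero_iff_of_nonneg
      (fun u _ => Complex.normSq_nonneg (c u))).mp h3 u (Finset.mem_univ u)
    simpa using Complex.normSq_eq_zero.mp this
  have hinj' : Function.Injective T := by
    rw [← LinearMap.ker_eq_bot]
    exact LinearMap.ker_eq_bot'.mpr hinj
  have hcard : Fintype.card ((Fin d ⊕ Fin d) ⊕ ((Fin d × Fin d) ⊕ σ))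
      = 2 * d + d * d + (d + 1) * d / 2 := by
    simp only [Fintype.card_sum, Fintype.card_prod, Fintype.card_fin]
    rw [st19_card_sym]
    ring
  have hle1 : n ≤ 2 * d + d * d + (d + 1) * d / 2 := by
    calc n = Module.finrank ℂ (Fin n → ℂ) := by simp [Module.finrank_pi]
      _ ≤ Module.finrank ℂ (((Fin d ⊕ Fin d) ⊕ ((Fin d × Fin d) ⊕ σ)) → ℂ) :=
          LinearMap.finrank_le_finrank_of_injective hinj'
      _ = 2 * d + d * d + (d + 1) * d / 2 := by rw [Module.finrank_pi, hcard]
  rcases lt_or_eq_of_le hle1 with h | hn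
  · exact h
  exfalso
  -- surjectivity
  have hker : LinearMap.ker T = ⊥ := LinearMap.ker_eq_bot'.mpr hinj
  have hrange : LinearMap.range T = ⊤ := by
    apply Submodule.eq_top_of_finrank_eq
    have h4 := LinearMap.finrank_range_add_finrank_ker T
    rw [hker, finrank_bot, add_zero] at h4
    rw [h4]
    rw [Module.finrank_pi, Module.finrank_pi]
    simpa [hcard] using hn
  have hsurj : Function.Surjective T := LinearMap.range_eq_top.mp hrange
  -- Parseval-type computations
  have hFsingle : ∀ u, T (Pi.single u 1) = F u := by
    intro u
    funext z
    rw [hTapp]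
    have h : ∀ u', (Pi.single u (1 : ℂ) : Fin n → ℂ) u' * F u' z
        = if u' = u then F u' z else 0 := by
      intro u'
      by_cases hh : u' = u <;> simp [Pi.single_apply, hh]
    rw [Finset.sum_congr rfl fun u' _ => h u', Finset.sum_ite_eq']
    simp
  set xI : ((Fin d ⊕ Fin d) ⊕ ((Fin d × Fin d) ⊕ σ)) → ℂ :=
    Sum.elim (fun _ => 0)
      (Sum.elim (fun p => if p.1 = p.2 then ((sa : ℝ) : ℂ) else 0) (fun _ => 0)) with hxI
  obtain ⟨c, hc⟩ := hsurj xI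
  have hFdotxI : ∀ u, ∑ z, conj (F u z) * xI z = (((1 + sr) * lam : ℝ) : ℂ) := by
    intro u
    rw [Fintype.sum_sum_type, Fintype.sum_sum_type, Fintype.sum_sum_type]
    simp only [hF, hxI, Sum.elim_inl, Sum.elim_inr, mul_zero, Finset.sum_const_zero,
      add_zero, zero_add]
    have h1 : ∀ p : Fin d × Fin d,
        conj ((sa : ℂ) * (v u p.1 * conj (v u p.2))) * (if p.1 = p.2 then ((sa : ℝ) : ℂ) else 0)
        = if p.1 = p.2 then ((1 + sr : ℝ) : ℂ) * ((Complex.normSq (v u p.1) : ℝ) : ℂ) else 0 := by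
      rintro ⟨i, j⟩
      split_ifs with hp
      · obtain rfl : i = j := hp
        rw [Complex.mul_conj, _root_.map_mul, Complex.conj_ofReal,
          Complex.conj_ofReal, ← hsa2]
        push_cast
        ring
      · rw [mul_zero]
    rw [Finset.sum_congr rfl fun p _ => h1 p, Fintype.sum_prod_type]
    have h2 : ∀ i : Fin d, (∑ j : Fin d, if i = j
        then ((1 + sr : ℝ) : ℂ) * ((Complex.normSq (v u i) : ℝ) : ℂ) else 0)
        = ((1 + sr : ℝ) : ℂ) * ((Complex.normSq (v u i) : ℝ) : ℂ) := by
      intro i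
      rw [Finset.sum_ite_eq]
      simp
    rw [Finset.sum_congr rfl fun i _ => h2 i, ← Finset.mul_sum]
    rw [show (∑ i, ((Complex.normSq (v u i) : ℝ) : ℂ)) = (((∑ i, Complex.normSq (v u i)) : ℝ) : ℂ)
      by push_cast; rfl]
    rw [hvlam u]
    push_cast
    ring
  have hcu : ∀ u, ((Qr : ℝ) : ℂ) * c u = (((1 + sr) * lam : ℝ) : ℂ) := by
    intro u
    have h1 := hKEY (Pi.single u 1) c
    rw [hFsingle u, hc] at h1
    rw [st19_single_dot c u, hFdotxI u] at h1
    exact h1.symm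
  have hcval : ∀ u, c u = (((1 + sr) * lam : ℝ) : ℂ) / ((Qr : ℝ) : ℂ) := by
    intro u
    rw [eq_div_iff hQC]
    rw [mul_comm]
    exact hcu u
  have hxIxI : ∑ z, conj (xI z) * xI z = ((d * (1 + sr) : ℝ) : ℂ) := by
    rw [Fintype.sum_sum_type, Fintype.sum_sum_type, Fintype.sum_sum_type]
    simp only [hxI, Sum.elim_inl, Sum.elim_inr, mul_zero, Finset.sum_const_zero,
      add_zero, zero_add, map_zero]
    have h1 : ∀ p : Fin d × Fin d,
        conj (if p.1 = p.2 then ((sa : ℝ) : ℂ) else 0) * (if p.1 = p.2 then ((sa : ℝ) : ℂ) else 0)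
        = if p.1 = p.2 then ((1 + sr : ℝ) : ℂ) else 0 := by
      rintro ⟨i, j⟩
      split_ifs with hp
      · rw [Complex.conj_ofReal, ← hsa2]
        push_cast
        ring
      · rw [mul_zero]
    rw [Finset.sum_congr rfl fun p _ => h1 p, Fintype.sum_prod_type]
    have h2 : ∀ i : Fin d, (∑ j : Fin d, if i = j then ((1 + sr : ℝ) : ℂ) else 0)
        = ((1 + sr : ℝ) : ℂ) := by
      intro i
      rw [Finset.sum_ite_eq]
      simp
    rw [Finset.sum_congr rfl fun i _ => h2 i, Finset.sum_const]
    simp only [Finset.card_univ, Fintype.card_fin, nsmul_eq_mul]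
    push_cast
    ring
  have hE1 : (d : ℝ) * (1 + sr) * Qr = (n : ℝ) * ((1 + sr) * lam) ^ 2 := by
    have h1 := hKEY c c
    rw [hc, hxIxI] at h1
    have h2 : ∑ u, conj (c u) * c u
        = (n : ℂ) * ((((1 + sr) * lam : ℝ) : ℂ) / ((Qr : ℝ) : ℂ)) ^ 2 := by
      have h3 : ∀ u : Fin n, conj (c u) * c u
          = ((((1 + sr) * lam : ℝ) : ℂ) / ((Qr : ℝ) : ℂ)) ^ 2 := by
        intro u
        rw [hcval u, _root_.map_div₀, Complex.conj_ofReal, Complex.conj_ofReal]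
        ring
      rw [Finset.sum_congr rfl fun u _ => h3 u, Finset.sum_const]
      simp only [Finset.card_univ, Fintype.card_fin, nsmul_eq_mul]
    rw [h2] at h1
    have h4 : ((d : ℝ) * (1 + sr) * Qr * Qr : ℂ) = ((n : ℝ) * ((1 + sr) * lam) ^ 2 * Qr : ℂ) := by
      push_cast
      push_cast at h1
      field_simp at h1
      linear_combination (Qr : ℂ) * h1
    have h5 : (d : ℝ) * (1 + sr) * Qr * Qr = (n : ℝ) * ((1 + sr) * lam) ^ 2 * Qr := by
      exact_mod_cast h4
    have hQne : Qr ≠ 0 := ne_of_gt hQpos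
    exact mul_right_cancel₀ hQne h5
  have hδ : ∀ p : Fin d × Fin d,
      Qr = ∑ u, Complex.normSq (F u (Sum.inr (Sum.inl p))) := by
    intro p
    obtain ⟨c2, hc2⟩ := hsurj (Pi.single (Sum.inr (Sum.inl p)) 1)
    have hc2u : ∀ u, ((Qr : ℝ) : ℂ) * c2 u = conj (F u (Sum.inr (Sum.inl p))) := by
      intro u
      have h1 := hKEY (Pi.single u 1) c2
      rw [hFsingle u, hc2] at h1
      rw [st19_single_dot c2 u, st19_dot_single (F u) _] at h1
      exact h1.symm
    have h1 := hKEY c2 c2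
    rw [hc2] at h1
    rw [st19_dot_single (Pi.single (Sum.inr (Sum.inl p)) (1 : ℂ)) _] at h1
    simp only [Pi.single_eq_same, _root_.map_one] at h1
    have h2 : ∑ u, conj (c2 u) * c2 u
        = ((∑ u, Complex.normSq (F u (Sum.inr (Sum.inl p))) : ℝ) : ℂ) / (((Qr : ℝ) : ℂ) * ((Qr : ℝ) : ℂ)) := by
      have h3 : ∀ u : Fin n, conj (c2 u) * c2 u
          = ((Complex.normSq (F u (Sum.inr (Sum.inl p))) : ℝ) : ℂ) / (((Qr : ℝ) : ℂ) * ((Qr : ℝ) : ℂ)) := by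
        intro u
        have h4 : c2 u = conj (F u (Sum.inr (Sum.inl p))) / ((Qr : ℝ) : ℂ) := by
          rw [eq_div_iff hQC, mul_comm]
          exact hc2u u
        rw [h4, _root_.map_div₀, Complex.conj_conj, Complex.conj_ofReal]
        rw [div_mul_div_comm]
        congr 1
        exact Complex.mul_conj _
      rw [Finset.sum_congr rfl fun u _ => h3 u, ← Finset.sum_div]
      congr 1
      push_cast
      rfl
    rw [h2] at h1
    have h5 : ((Qr : ℝ) : ℂ)
        = ((∑ u, Complex.normSq (F u (Sum.inr (Sum.inl p))) : ℝ) : ℂ) := by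
      field_simp [hQC] at h1
      push_cast
      exact_mod_cast h1
    exact_mod_cast h5
  have hFnorm : ∀ (u : Fin n) (p : Fin d × Fin d),
      Complex.normSq (F u (Sum.inr (Sum.inl p)))
      = (1 + sr) * (Complex.normSq (v u p.1) * Complex.normSq (v u p.2)) := by
    intro u p
    simp only [hF, Sum.elim_inr, Sum.elim_inl]
    rw [Complex.normSq_mul, Complex.normSq_mul, Complex.normSq_conj]
    rw [Complex.normSq_ofReal, hsa2]
  have hE2 : ((d : ℝ) * d) * Qr = (n : ℝ) * ((1 + sr) * (lam * lam)) := by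
    have h1 : ∑ p : Fin d × Fin d, Qr = ((d : ℝ) * d) * Qr := by
      rw [Finset.sum_const]
      simp only [Finset.card_univ, Fintype.card_prod, Fintype.card_fin, nsmul_eq_mul]
      push_cast
      ring
    rw [← h1, Finset.sum_congr rfl fun p _ => hδ p, Finset.sum_comm]
    have h2 : ∀ u : Fin n, ∑ p : Fin d × Fin d, Complex.normSq (F u (Sum.inr (Sum.inl p)))
        = (1 + sr) * (lam * lam) := by
      intro u
      rw [Finset.sum_congr rfl fun p _ => hFnorm u p, ← Finset.mul_sum]
      congr 1
      rw [Fintype.sum_prod_type]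
      rw [show (∑ i : Fin d, ∑ j : Fin d, Complex.normSq (v u i) * Complex.normSq (v u j))
          = (∑ i : Fin d, Complex.normSq (v u i)) * (∑ j : Fin d, Complex.normSq (v u j)) from
        (Finset.sum_mul_sum _ _ _ _).symm]
      rw [hvlam u]
    rw [Finset.sum_congr rfl fun u _ => h2 u, Finset.sum_const]
    simp only [Finset.card_univ, Fintype.card_fin, nsmul_eq_mul]
  have hd2' : (2 : ℝ) ≤ (d : ℝ) := by exact_mod_cast hd2
  have h5 : (d : ℝ) * ((1 + sr) * Qr) = ((d : ℝ) * d) * ((1 + sr) * Qr) := by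
    linear_combination hE1 - (1 + sr) * hE2
  have h6 : (d : ℝ) = (d : ℝ) * d :=
    mul_right_cancel₀ (ne_of_gt (mul_pos hs hQpos)) h5
  nlinarith

/-- Let `H = H_ω(Δ)` (`ω` unimodular, non-real) have largest eigenvalue `λ₁ ∉ {0,−1}` of
multiplicity `n − d₁`, `d₁ ≥ 2`. Then there are `n` vectors in `ℂ^{d₁}` on the sphere of
radius `√λ₁` (i.e. `⟨v,v⟩ = λ₁`) whose normalized pairwise Hermitian inner products lie in
`{0, −1/λ₁, −ω/λ₁, −conj(ω)/λ₁}`, and consequently `n ≤ d₁(3d₁+5)/2 − 1`. -/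
theorem stmt_19 (n d : ℕ) (E : Fin n → Fin n → Prop) [DecidableRel E]
    (hirr : ∀ x, ¬ E x x) (ω : ℂ) (hωabs : ‖ω‖ = 1) (hωim : ω.im ≠ 0)
    (lam : ℝ) (h0 : lam ≠ 0) (h1 : lam ≠ -1)
    (heig : Module.End.HasEigenvalue (Matrix.toLin' (hermAdj n E ω)) (lam : ℂ))
    (hmax : ∀ μ : ℝ, Module.End.HasEigenvalue (Matrix.toLin' (hermAdj n E ω)) (μ : ℂ) →
      μ ≤ lam)
    (hd2 : 2 ≤ d) (hdn : d ≤ n)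
    (hmult : Module.finrank ℂ
      (Module.End.eigenspace (Matrix.toLin' (hermAdj n E ω)) (lam : ℂ)) = n - d) :
    (∃ v : Fin n → (Fin d → ℂ),
      (∀ u, star (v u) ⬝ᵥ v u = (lam : ℂ)) ∧
      (∀ u w, u ≠ w → (star (v u) ⬝ᵥ v w) / (lam : ℂ) ∈
        ({0, -1 / (lam : ℂ), -ω / (lam : ℂ), -(starRingEnd ℂ ω) / (lam : ℂ)} : Set ℂ))) ∧
    n ≤ d * (3 * d + 5) / 2 - 1 := by
  classical
  set A := hermAdj n E ω with hAdef
  have hA : A.IsHermitian := by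
    unfold Matrix.IsHermitian
    ext u w
    simp only [Matrix.conjTranspose_apply, hAdef, hermAdj, Matrix.of_apply]
    by_cases hh1 : E u w <;> by_cases hh2 : E w u <;>
      simp [hh1, hh2, and_comm]
  obtain ⟨hle, hcard, hnd1⟩ := st19_eigen_data A hA lam heig hmax hdn hmult
  obtain ⟨v, hv⟩ := st19_factor A hA lam hle hcard
  have hAdiag : ∀ u, A u u = 0 := fun u => by simp [hAdef, hermAdj, hirr u]
  have htdiag : ∀ u, star (v u) ⬝ᵥ v u = (lam : ℂ) := by
    intro u
    rw [hv u u, Matrix.sub_apply, Matrix.smul_apply, Matrix.one_apply_eq, hAdiag u,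
      smul_eq_mul, mul_one, sub_zero]
  have htoff : ∀ u w, u ≠ w → star (v u) ⬝ᵥ v w = -(A u w) := by
    intro u w h
    rw [hv u w, Matrix.sub_apply, Matrix.smul_apply, Matrix.one_apply_ne h,
      smul_eq_mul, mul_zero, zero_sub]
  have hdot' : ∀ u w, star (v u) ⬝ᵥ v w = ∑ k, (starRingEnd ℂ) (v u k) * v w k := by
    intro u w
    simp [dotProduct, Pi.star_apply, RCLike.star_def]
  have hn0 : 0 < n := by omega
  have hvlam : ∀ u, (∑ i, Complex.normSq (v u i)) = lam := by
    intro u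
    have h1' := htdiag u
    rw [hdot' u u, st19_sum_conj_mul_self] at h1'
    exact_mod_cast h1'
  have hlampos : 0 < lam := by
    have h1' := hvlam ⟨0, hn0⟩
    have h2' : 0 ≤ ∑ i, Complex.normSq (v ⟨0, hn0⟩ i) :=
      Finset.sum_nonneg fun i _ => Complex.normSq_nonneg _
    rw [h1'] at h2'
    exact lt_of_le_of_ne h2' (Ne.symm h0)
  -- constants
  have hωc : ω * (starRingEnd ℂ) ω = 1 := by
    rw [Complex.mul_conj]
    rw [Complex.normSq_eq_norm_sq, hωabs]
    norm_num
  set sr : ℝ := 2 * ω.re with hsrdef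
  have hscast : ((sr : ℝ) : ℂ) = ω + (starRingEnd ℂ) ω := by
    rw [hsrdef]
    exact_mod_cast (Complex.add_conj ω).symm
  have hre : ω.re * ω.re + ω.im * ω.im = 1 := by
    have := Complex.normSq_eq_norm_sq ω
    rw [hωabs] at this
    simp only [Complex.normSq_apply] at this
    nlinarith [this]
  have him : 0 < ω.im * ω.im := by
    rcases lt_or_gt_of_ne hωim with h | h <;> nlinarith
  have h2s : 0 < 2 + sr := by
    rw [hsrdef]
    nlinarith [sq_nonneg (ω.re + 1)]
  set Qr : ℝ := (2 + sr) * (lam + lam ^ 2) with hQrdef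
  have hQpos : 0 < Qr := by
    rw [hQrdef]
    nlinarith
  have hQ : ∀ u w, (1 + (sr : ℂ)) * (star (v u) ⬝ᵥ v w) + (star (v w) ⬝ᵥ v u)
      + (1 + (sr : ℂ)) * ((star (v u) ⬝ᵥ v w) * (star (v w) ⬝ᵥ v u))
      + (star (v u) ⬝ᵥ v w) ^ 2
      = if u = w then ((Qr : ℝ) : ℂ) else 0 := by
    intro u w
    by_cases huw : u = w
    · subst huw
      rw [if_pos rfl, htdiag u, hQrdef]
      push_cast
      ring
    · rw [if_neg huw, htoff u w huw, htoff w u (Ne.symm huw)]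
      simp only [hAdef, hermAdj, Matrix.of_apply]
      rw [hscast]
      by_cases hh1 : E u w <;> by_cases hh2 : E w u
      · rw [if_pos ⟨hh1, hh2⟩, if_pos ⟨hh2, hh1⟩]
        ring
      · rw [if_neg (fun hh => hh2 hh.2), if_pos hh1, if_neg (fun hh => hh2 hh.1),
          if_neg hh2, if_pos hh1]
        linear_combination (ω + (starRingEnd ℂ) ω) * hωc
      · rw [if_neg (fun hh => hh1 hh.1), if_neg hh1, if_pos hh2,
          if_neg (fun hh => hh1 hh.2), if_pos hh2]
        linear_combination (ω + (starRingEnd ℂ) ω) * hωc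
      · rw [if_neg (fun hh => hh1 hh.1), if_neg hh1, if_neg hh2,
          if_neg (fun hh => hh1 hh.2), if_neg hh2, if_neg hh1]
        ring
  constructor
  · refine ⟨v, htdiag, ?_⟩
    intro u w h
    rw [htoff u w h]
    simp only [hAdef, hermAdj, Matrix.of_apply]
    by_cases hh1 : E u w <;> by_cases hh2 : E w u
    · rw [if_pos ⟨hh1, hh2⟩]
      exact Or.inr (Or.inl (by rw [neg_div]))
    · rw [if_neg (fun hh => hh2 hh.2), if_pos hh1]
      exact Or.inr (Or.inr (Or.inl (by rw [neg_div])))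
    · rw [if_neg (fun hh => hh1 hh.1), if_neg hh1, if_pos hh2]
      exact Or.inr (Or.inr (Or.inr (by rw [neg_div]; rfl)))
    · rw [if_neg (fun hh => hh1 hh.1), if_neg hh1, if_neg hh2]
      exact Or.inl (by simp)
  · -- the bound
    obtain ⟨r, hr⟩ : ∃ r, d * (d + 1) = r + r := by
      obtain ⟨r, hr⟩ := Nat.even_mul_succ_self d
      exact ⟨r, hr⟩
    obtain ⟨m, hm⟩ : ∃ m, d * d = m := ⟨_, rfl⟩
    have hgoal : d * (3 * d + 5) = 3 * m + 5 * d := by rw [← hm]; ring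
    have hrr : d * (d + 1) = m + d := by rw [← hm]; ring
    have hr' : m + d = r + r := by omega
    rcases le_or_gt (1 + sr) 0 with hcase | hcase
    · have hb := st19_caseA v sr Qr hQ hQpos hcase
      have hb' : (d + 1) * d = m + d := by rw [← hm]; ring
      rw [hb'] at hb
      rw [hgoal]
      omega
    · have hb := st19_caseB v lam sr Qr hQ hQpos hcase hd2 hvlam
      have hb' : (d + 1) * d = m + d := by rw [← hm]; ring
      rw [hb', hm] at hb
      rw [hgoal]
      omega
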